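/- Let L ∈ ℝ^{n×n} be the graph Laplacian of a strongly connected weighted directed graph on n nodes, let w = (w_1,…,w_n) be a vector with all entries strictly positive satisfying wᵀL = 0, and set W = diag(w_1,…,w_n). Then the symmetric matrix WL + LᵀW is positive semidefinite. -/

import Mathlib

open Matrix

/-- **Lemma 1 (second part).** If `L` is the graph Laplacian of a strongly connected
weighted directed graph on `n` nodes, `w` is a vector with all entries strictly positive
satisfying `wᵀ L = 0`, and `W = diag w`, then the symmetric matrix `W L + Lᵀ W` is
positive semidefinite. -/
theorem laplacian_WL_add_LtW_posSemidef
    (n : ℕ) (a : Fin n → Fin n → ℝ) (L : Matrix (Fin n) (Fin n) ℝ)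
    (hnn : ∀ i j, i ≠ j → 0 ≤ a i j)
    (hdiag : ∀ i, L i i = ∑ j ∈ Finset.univ.erase i, a i j)
    (hoff : ∀ i j, i ≠ j → L i j = -a i j)
    (hsc : ∀ i j : Fin n, i ≠ j → Relation.TransGen (fun u v => 0 < a u v) i j)
    (w : Fin n → ℝ) (hw : ∀ i, 0 < w i) (hwL : Matrix.vecMul w L = 0) :
    (Matrix.diagonal w * L + Lᵀ * Matrix.diagonal w).PosSemidef := by
  classical
  set M : Matrix (Fin n) (Fin n) ℝ := Matrix.diagonal w * L + Lᵀ * Matrix.diagonal w with hM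
  set b : Fin n → Fin n → ℝ :=
    fun i j => if i = j then 0 else w i * a i j + w j * a j i with hbdef
  have hbnn : ∀ i j, 0 ≤ b i j := by
    intro i j
    by_cases h : i = j
    · simp [hbdef, h]
    · simp only [hbdef, if_neg h]
      exact add_nonneg (mul_nonneg (hw i).le (hnn i j h))
        (mul_nonneg (hw j).le (hnn j i (Ne.symm h)))
  have hbsymm : ∀ i j, b i j = b j i := by
    intro i j
    by_cases h : i = j
    · simp [hbdef, h]
    · simp only [hbdef, if_neg h, if_neg (Ne.symm h)]
      ring
  have hbii : ∀ i, b i i = 0 := fun i => by simp [hbdef]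
  have hMentry : ∀ i j, M i j = w i * L i j + L j i * w j := by
    intro i j
    simp [hM, Matrix.add_apply, Matrix.diagonal_mul, Matrix.mul_diagonal,
      Matrix.transpose_apply]
  have hMoff : ∀ i j, i ≠ j → M i j = -b i j := by
    intro i j h
    rw [hMentry, hoff i j h, hoff j i (Ne.symm h)]
    simp only [hbdef, if_neg h]
    ring
  -- column condition from wᵀ L = 0
  have hcol : ∀ i, ∑ j ∈ Finset.univ.erase i, w j * a j i = w i * L i i := by
    intro i
    have h0 : ∑ j, w j * L j i = 0 := by
      have := congrFun hwL i
      simpa [Matrix.vecMul, dotProduct] using this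
    rw [← Finset.add_sum_erase _ (fun j => w j * L j i) (Finset.mem_univ i)] at h0
    have : ∑ j ∈ Finset.univ.erase i, w j * L j i = -(w i * L i i) := by linarith
    calc ∑ j ∈ Finset.univ.erase i, w j * a j i
        = -∑ j ∈ Finset.univ.erase i, w j * L j i := by
          rw [← Finset.sum_neg_distrib]
          refine Finset.sum_congr rfl fun j hj => ?_
          rw [hoff j i (Finset.ne_of_mem_erase hj)]
          ring
      _ = w i * L i i := by rw [this]; ring
  have hMdiag : ∀ i, M i i = ∑ j, b i j := by
    intro i
    have hb : ∑ j, b i j = 2 * (w i * L i i) := by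
      rw [← Finset.sum_erase Finset.univ (hbii i)]
      have : ∑ j ∈ Finset.univ.erase i, b i j
          = w i * (∑ j ∈ Finset.univ.erase i, a i j)
            + ∑ j ∈ Finset.univ.erase i, w j * a j i := by
        rw [Finset.mul_sum, ← Finset.sum_add_distrib]
        refine Finset.sum_congr rfl fun j hj => ?_
        simp only [hbdef, if_neg (Ne.symm (Finset.ne_of_mem_erase hj))]
      rw [this, ← hdiag i, hcol i]
      ring
    rw [hMentry, hb]
    ring
  -- quadratic form identity
  have hquad : ∀ x : Fin n → ℝ,
      2 * (x ⬝ᵥ M *ᵥ x) = ∑ i, ∑ j, b i j * (x i - x j) ^ 2 := by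
    intro x
    have hlhs : x ⬝ᵥ M *ᵥ x = ∑ i, ∑ j, x i * M i j * x j := by
      simp [dotProduct, Matrix.mulVec, Finset.mul_sum, mul_assoc]
    have hinner : ∀ i, ∑ j, x i * M i j * x j
        = ∑ j, (b i j * x i ^ 2 - b i j * (x i * x j)) := by
      intro i
      rw [← Finset.add_sum_erase _ (fun j => x i * M i j * x j) (Finset.mem_univ i),
        ← Finset.add_sum_erase _
          (fun j => b i j * x i ^ 2 - b i j * (x i * x j)) (Finset.mem_univ i)]
      have h1 : x i * M i i * x i = x i ^ 2 * ∑ j ∈ Finset.univ.erase i, b i j := by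
        rw [hMdiag i, ← Finset.sum_erase Finset.univ (hbii i)]
        ring
      have h2 : ∑ j ∈ Finset.univ.erase i, x i * M i j * x j
          = ∑ j ∈ Finset.univ.erase i, (-(b i j * (x i * x j))) := by
        refine Finset.sum_congr rfl fun j hj => ?_
        rw [hMoff i j (Ne.symm (Finset.ne_of_mem_erase hj))]
        ring
      rw [h1, h2, hbii i, Finset.mul_sum, ← Finset.sum_add_distrib, zero_mul, zero_mul,
        sub_zero, zero_add]
      exact Finset.sum_congr rfl fun j _ => by ring
    have hswap : ∑ i, ∑ j, b i j * x j ^ 2 = ∑ i, ∑ j, b i j * x i ^ 2 := by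
      rw [Finset.sum_comm]
      exact Finset.sum_congr rfl fun i _ => Finset.sum_congr rfl fun j _ => by
        rw [hbsymm i j]
    have lhs2 : ∑ i, ∑ j, (b i j * x i ^ 2 - b i j * (x i * x j))
        = (∑ i, ∑ j, b i j * x i ^ 2) - ∑ i, ∑ j, b i j * (x i * x j) := by
      rw [← Finset.sum_sub_distrib]
      exact Finset.sum_congr rfl fun i _ => by rw [← Finset.sum_sub_distrib]
    have expand : ∑ i, ∑ j, b i j * (x i - x j) ^ 2
        = (∑ i, ∑ j, b i j * x i ^ 2) + (∑ i, ∑ j, b i j * x j ^ 2)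
          - 2 * ∑ i, ∑ j, b i j * (x i * x j) := by
      rw [Finset.mul_sum, ← Finset.sum_add_distrib, ← Finset.sum_sub_distrib]
      refine Finset.sum_congr rfl fun i _ => ?_
      rw [Finset.mul_sum, ← Finset.sum_add_distrib, ← Finset.sum_sub_distrib]
      exact Finset.sum_congr rfl fun j _ => by ring
    have hmid : ∑ i, ∑ j, x i * M i j * x j
        = ∑ i, ∑ j, (b i j * x i ^ 2 - b i j * (x i * x j)) :=
      Finset.sum_congr rfl fun i _ => hinner i
    rw [hlhs, hmid, lhs2, expand, hswap]
    ring
  have hherm : M.IsHermitian := by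
    unfold Matrix.IsHermitian
    ext i j
    simp only [Matrix.conjTranspose_apply, star_trivial]
    rw [hMentry i j, hMentry j i]
    ring
  rw [Matrix.posSemidef_iff_dotProduct_mulVec]
  refine ⟨hherm, fun x => ?_⟩
  have hx : (star x : Fin n → ℝ) = x := by simp
  rw [hx]
  have h2 : 0 ≤ 2 * (x ⬝ᵥ M *ᵥ x) := by
    rw [hquad x]
    refine Finset.sum_nonneg fun i _ => Finset.sum_nonneg fun j _ => ?_
    exact mul_nonneg (hbnn i j) (sq_nonneg _)
  linarith
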